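/- arXiv:1610.09523 — 3 statements merged into one kernel-verified Lean document; each statement's English description precedes it below -/
import Mathlib

section
/- Let T be a triangulated category with suspension functor Σ, and let A be a preaisle of T, i.e. a nonempty full subcategory such that ΣX ∈ A for every X ∈ A, and Y ∈ A whenever X → Y → Z → ΣX is a distinguished triangle with X, Z ∈ A. Then the inclusion functor A ↪ T admits a right adjoint if and only if the pair (A, ΣA^⊥) is a t-structure on T. -/
/-!
STATEMENT 0: For a preaisle `A` in a triangulated category `T`, the inclusion
`A ↪ T` admits a right adjoint if and only if `(A, Σ A^⊥)` is a t-structure on `T`.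
-/

open CategoryTheory CategoryTheory.Limits CategoryTheory.Pretriangulated ZeroObject

universe v u

variable {T : Type u} [Category.{v} T] [HasZeroObject T] [HasShift T ℤ]
  [Preadditive T] [∀ n : ℤ, (shiftFunctor T n).Additive] [Pretriangulated T]

/-- A preaisle: a nonempty full subcategory closed under suspension and under
extensions (in a triangle `X ⟶ Y ⟶ Z ⟶ ΣX`, if `X, Z` belong then so does `Y`). -/
structure IsPreaisle (A : Set T) : Prop where
  nonempty : A.Nonempty
  shift_mem : ∀ {X : T}, X ∈ A → X⟦(1 : ℤ)⟧ ∈ A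
  ext_mem : ∀ Tr : Triangle T, (Tr ∈ distTriang T) →
    Tr.obj₁ ∈ A → Tr.obj₃ ∈ A → Tr.obj₂ ∈ A

/-- The right orthogonal `A^⊥ = {X : Hom(A', X) = 0 for all A' ∈ A}`. -/
def rightPerp (A : Set T) : Set T :=
  {X : T | ∀ A' ∈ A, ∀ f : A' ⟶ X, f = 0}

/-- The `n`-fold suspension `Σⁿ A` of a full subcategory `A`. -/
def shiftSet (n : ℤ) (A : Set T) : Set T :=
  {X : T | ∃ B ∈ A, Nonempty (X ≅ B⟦n⟧)}

/-- A t-structure `(A, A')`: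
(1) `ΣA ⊆ A` and `A' ⊆ ΣA'`;
(2) `Hom(A, B) = 0` for `A ∈ A`, `B ∈ Σ⁻¹A'`;
(3) every `X` fits in a distinguished triangle `A ⟶ X ⟶ B ⟶ ΣA` with
`A ∈ A`, `B ∈ Σ⁻¹A'`. -/
structure IsTStructure (A A' : Set T) : Prop where
  shift_subset : shiftSet (1 : ℤ) A ⊆ A
  subset_shift : A' ⊆ shiftSet (1 : ℤ) A'
  hom_zero : ∀ X ∈ A, ∀ B ∈ shiftSet (-1 : ℤ) A', ∀ f : X ⟶ B, f = 0
  exists_triangle : ∀ X : T, ∃ (Y Z : T) (i : Y ⟶ X) (q : X ⟶ Z) (w : Z ⟶ Y⟦(1 : ℤ)⟧),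
    (Triangle.mk i q w ∈ distTriang T) ∧ Y ∈ A ∧ Z ∈ shiftSet (-1 : ℤ) A'

namespace KellerVossieckAux

variable {A : Set T}

lemma preaisle_zero_mem (hA : IsPreaisle A) : (0 : T) ∈ A := by
  obtain ⟨W, hW⟩ := hA.nonempty
  exact hA.ext_mem _ (rot_of_distTriang _ (contractible_distinguished W)) hW (hA.shift_mem hW)

lemma preaisle_mem_of_iso (hA : IsPreaisle A) {P X : T} (e : P ≅ X) (hP : P ∈ A) : X ∈ A := by
  have h : Triangle.mk e.hom (0 : X ⟶ 0) (0 : (0 : T) ⟶ P⟦(1 : ℤ)⟧) ∈ distTriang T := by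
    refine isomorphic_distinguished _ (contractible_distinguished P) _ ?_
    exact Triangle.isoMk _ _ (Iso.refl P) e.symm (Iso.refl 0) (by simp; exact e.hom_inv_id.trans (Category.comp_id _).symm) (by simp; exact zero_comp.trans comp_zero.symm) (by simp; exact zero_comp.trans (zero_comp (X := (0:T))).symm)
  exact hA.ext_mem _ h hP (preaisle_zero_mem hA)

/-- maps from a shifted-down person of `A` into a right-perp object vanish after unshifting -/
lemma hom_to_shift_neg_perp (hA : IsPreaisle A) {D B : T} (hD : D ∈ rightPerp A) (hB : B ∈ A)
    (f : B ⟶ D⟦(-1 : ℤ)⟧) : f = 0 := by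
  have h : f⟦(1 : ℤ)⟧' ≫ (shiftEquiv T (1 : ℤ)).counitIso.hom.app D = 0 :=
    hD _ (hA.shift_mem hB) _
  apply (shiftFunctor T (1 : ℤ)).map_injective
  rw [Functor.map_zero]
  exact (cancel_mono ((shiftEquiv T (1 : ℤ)).counitIso.hom.app D)).mp (h.trans (zero_comp).symm)

lemma mem_shift_iff {Z : T}
    (h : Z ∈ shiftSet (-1 : ℤ) (shiftSet (1 : ℤ) (rightPerp A))) :
    ∃ D ∈ rightPerp A, Nonempty (Z ≅ D) := by
  obtain ⟨C, ⟨D, hD, ⟨e1⟩⟩, ⟨e2⟩⟩ := h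
  exact ⟨D, hD, ⟨e2 ≪≫ (shiftFunctor T (-1 : ℤ)).mapIso e1 ≪≫
    ((shiftEquiv T (1 : ℤ)).unitIso.app D).symm⟩⟩

lemma mem_shift_of_perp {Z : T} (hZ : Z ∈ rightPerp A) :
    Z ∈ shiftSet (-1 : ℤ) (shiftSet (1 : ℤ) (rightPerp A)) :=
  ⟨Z⟦(1 : ℤ)⟧, ⟨Z, hZ, ⟨Iso.refl _⟩⟩, ⟨(shiftEquiv T (1 : ℤ)).unitIso.app Z⟩⟩

lemma tstructure_shift_subset (hA : IsPreaisle A) : shiftSet (1 : ℤ) A ⊆ A := by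
  rintro X ⟨B, hB, ⟨e⟩⟩
  exact preaisle_mem_of_iso hA e.symm (hA.shift_mem hB)

lemma tstructure_subset_shift (hA : IsPreaisle A) :
    shiftSet (1 : ℤ) (rightPerp A) ⊆ shiftSet (1 : ℤ) (shiftSet (1 : ℤ) (rightPerp A)) := by
  rintro X ⟨B, hB, ⟨e⟩⟩
  refine ⟨B, ⟨B⟦(-1 : ℤ)⟧, ?_, ⟨((shiftEquiv T (1 : ℤ)).counitIso.app B).symm⟩⟩, ⟨e⟩⟩
  intro A' hA' f
  exact hom_to_shift_neg_perp hA hB hA' f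

lemma tstructure_hom_zero (hA : IsPreaisle A) :
    ∀ X ∈ A, ∀ B ∈ shiftSet (-1 : ℤ) (shiftSet (1 : ℤ) (rightPerp A)), ∀ f : X ⟶ B, f = 0 := by
  intro X hX B hB f
  obtain ⟨D, hD, ⟨e⟩⟩ := mem_shift_iff hB
  have : f ≫ e.hom = 0 := hD _ hX _
  rw [← Category.comp_id f, ← e.hom_inv_id, ← Category.assoc, this, zero_comp]

end KellerVossieckAux

open KellerVossieckAux in
/-- Keller–Vossieck: a preaisle `A` is an aisle (the inclusion `A ↪ T` has a
right adjoint) if and only if `(A, Σ A^⊥)` is a t-structure on `T`. -/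
theorem preaisle_isLeftAdjoint_iff_tStructure (A : Set T) (hA : IsPreaisle A) :
    (ObjectProperty.ι (fun X => X ∈ A)).IsLeftAdjoint ↔
      IsTStructure A (shiftSet (1 : ℤ) (rightPerp A)) := by
  set ι := ObjectProperty.ι (fun X => X ∈ A) with hι
  constructor
  · intro h
    obtain ⟨R, ⟨adj⟩⟩ := h.exists_rightAdjoint
    refine ⟨tstructure_shift_subset hA, tstructure_subset_shift hA, tstructure_hom_zero hA, ?_⟩
    intro X
    -- factorization through the counit, and its uniqueness
    have key : ∀ (W : T) (B' : ObjectProperty.FullSubcategory (fun X => X ∈ A)) (g : ι.obj B' ⟶ W),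
        ∃ g' : ι.obj B' ⟶ ι.obj (R.obj W), g' ≫ adj.counit.app W = g := by
      intro W B' g
      refine ⟨ι.map (adj.homEquiv B' W g), ?_⟩
      have := (adj.homEquiv B' W).symm_apply_apply g
      rw [Adjunction.homEquiv_counit] at this
      exact this
    have inj : ∀ (W : T) (B' : ObjectProperty.FullSubcategory (fun X => X ∈ A))
        (h₁ h₂ : ι.obj B' ⟶ ι.obj (R.obj W)),
        h₁ ≫ adj.counit.app W = h₂ ≫ adj.counit.app W → h₁ = h₂ := by
      intro W B' h₁ h₂ hh
      have := (adj.homEquiv B' W).symm.injective (a₁ := ObjectProperty.homMk h₁) (a₂ := ObjectProperty.homMk h₂)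
      apply congrArg (fun k => k.hom) (this ?_)
      rw [Adjunction.homEquiv_counit, Adjunction.homEquiv_counit]
      exact hh
    obtain ⟨Z, q, w, hTr⟩ := distinguished_cocone_triangle (adj.counit.app X)
    refine ⟨ι.obj (R.obj X), Z, adj.counit.app X, q, w, hTr, (R.obj X).property, ?_⟩
    apply mem_shift_of_perp
    intro B hB f
    -- build the extension triangle with third map `f ≫ w`
    obtain ⟨E, δ, p, hT₁⟩ := distinguished_cocone_triangle₂ (f ≫ w)
    have hE : E ∈ A := hA.ext_mem _ hT₁ (R.obj X).property hB
    obtain ⟨m, hm₁, _⟩ := complete_distinguished_triangle_morphism₂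
      (Triangle.mk δ p (f ≫ w)) (Triangle.mk (adj.counit.app X) q w) hT₁ hTr
      (𝟙 _) f (by simp; erw [CategoryTheory.Functor.map_id, Category.comp_id]; rfl)
    -- δ is a split monomorphism
    obtain ⟨g, hg⟩ := key X ⟨E, hE⟩ m
    have hsplit : δ ≫ g = 𝟙 (ι.obj (R.obj X)) := by
      apply inj X (R.obj X)
      rw [Category.assoc, hg, Category.id_comp]
      exact hm₁.trans (Category.id_comp _)
    -- hence the connecting map vanishes
    have hγδ : (f ≫ w) ≫ δ⟦(1 : ℤ)⟧' = 0 := comp_distTriang_mor_zero₃₁ _ hT₁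
    have hγ : f ≫ w = 0 := by
      calc f ≫ w = (f ≫ w) ≫ (δ ≫ g)⟦(1 : ℤ)⟧' := by rw [hsplit]; simp
        _ = ((f ≫ w) ≫ δ⟦(1 : ℤ)⟧') ≫ g⟦(1 : ℤ)⟧' := by
            simp only [Functor.map_comp, Category.assoc]
        _ = 0 := by rw [hγδ, zero_comp]
    -- conclude f = 0
    obtain ⟨g₂, hg₂⟩ := Triangle.coyoneda_exact₃ _ hTr f hγ
    obtain ⟨g₃, hg₃⟩ := key X ⟨B, hB⟩ g₂
    have hεq : adj.counit.app X ≫ q = 0 := comp_distTriang_mor_zero₁₂ _ hTr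
    calc f = g₂ ≫ q := hg₂
      _ = (g₃ ≫ adj.counit.app X) ≫ q := by rw [hg₃]; rfl
      _ = g₃ ≫ (adj.counit.app X ≫ q) := Category.assoc _ _ _
      _ = 0 := by rw [hεq, comp_zero]
  · intro hT
    choose Y Z i q w hTr hY hZ using hT.exists_triangle
    have hzero : ∀ (X B : T), B ∈ A → ∀ g : B ⟶ Z X, g = 0 := by
      intro X B hB g
      obtain ⟨D, hD, ⟨e⟩⟩ := mem_shift_iff (hZ X)
      have : g ≫ e.hom = 0 := hD _ hB _
      rw [← Category.comp_id g, ← e.hom_inv_id, ← Category.assoc, this, zero_comp]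
    have hzero' : ∀ (X B : T), B ∈ A → ∀ g : B ⟶ (Z X)⟦(-1 : ℤ)⟧, g = 0 := by
      intro X B hB g
      obtain ⟨D, hD, ⟨e⟩⟩ := mem_shift_iff (hZ X)
      have h1 : g ≫ (shiftFunctor T (-1 : ℤ)).map e.hom = 0 :=
        hom_to_shift_neg_perp hA hD hB _
      have h2 := congrArg (fun t => t ≫ (shiftFunctor T (-1 : ℤ)).map e.inv) h1
      simp only [Category.assoc, ← Functor.map_comp, e.hom_inv_id,
        CategoryTheory.Functor.map_id, Category.comp_id, zero_comp] at h2
      exact h2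
    have hbij : ∀ (B : ObjectProperty.FullSubcategory (fun X => X ∈ A)) (X : T),
        Function.Bijective (fun (h : B.obj ⟶ Y X) => h ≫ i X) := by
      intro B X
      constructor
      · intro h₁ h₂ hh
        have hh' : h₁ ≫ i X = h₂ ≫ i X := hh
        have hsub : (h₁ - h₂) ≫ i X = 0 := by
          rw [Preadditive.sub_comp, hh', sub_self]
        have hd : (Triangle.mk (i X) (q X) (w X)).invRotate ∈ distTriang T :=
          inv_rot_of_distTriang _ (hTr X)
        obtain ⟨g, hg⟩ := Triangle.coyoneda_exact₂ _ hd (h₁ - h₂) hsub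
        rw [hzero' X B.obj B.property g] at hg
        exact sub_eq_zero.mp (hg.trans zero_comp)
      · intro g
        have hq : g ≫ q X = 0 := hzero X B.obj B.property _
        obtain ⟨h, hh⟩ := Triangle.coyoneda_exact₂ _ (hTr X) g hq
        exact ⟨h, hh.symm⟩
    let e : ∀ (B : ObjectProperty.FullSubcategory (fun X => X ∈ A)) (X : T),
        (ι.obj B ⟶ X) ≃ (B ⟶ (⟨Y X, hY X⟩ : ObjectProperty.FullSubcategory (fun X => X ∈ A))) :=
      fun B X => (Equiv.ofBijective _ (hbij B X)).symm.trans
        ⟨fun f => ObjectProperty.homMk (X := B) (Y := ⟨Y X, hY X⟩) f, fun f => f.hom, fun _ => rfl,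
          fun _ => rfl⟩
    have happ : ∀ (B : ObjectProperty.FullSubcategory (fun X => X ∈ A)) (X : T) (g : ι.obj B ⟶ X),
        ((e B X g).hom ≫ i X : ι.obj B ⟶ X) = g := fun B X g =>
      (Equiv.ofBijective _ (hbij B X)).apply_symm_apply g
    have he : ∀ (B' B : ObjectProperty.FullSubcategory (fun X => X ∈ A)) (X : T) (f : B' ⟶ B)
        (g : ι.obj B ⟶ X), e B' X (ι.map f ≫ g) = f ≫ e B X g := by
      intro B' B X f g
      apply ObjectProperty.hom_ext
      refine (Equiv.symm_apply_eq (Equiv.ofBijective _ (hbij B' X))).mpr ?_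
      show ι.map f ≫ g = (f ≫ e B X g).hom ≫ i X
      rw [show (f ≫ e B X g).hom = ι.map f ≫ (e B X g).hom from rfl,
        Category.assoc, happ]
    exact ⟨⟨_, ⟨Adjunction.adjunctionOfEquivRight e he⟩⟩⟩
end

section
/- Let X ∈ D^c_fg(R), let n ∈ ℤ, and let (Y_α)_{α ∈ I} be any family of R-modules. Then the canonical map ⊕_{α ∈ I} Hom_{D(R)}(X, Σ^n Y_α) → Hom_{D(R)}(X, Σ^n ⊕_{α ∈ I} Y_α) is an isomorphism. -/
open CategoryTheory CategoryTheory.Limits CategoryTheory.Pretriangulated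

universe w u

variable (R : Type u) [CommRing R] [IsNoetherianRing R]
  [HasDerivedCategory.{w} (ModuleCat.{u} R)]

/-- The derived category `D(R)` of the commutative Noetherian ring `R`. -/
abbrev DCat := DerivedCategory (ModuleCat.{u} R)

/-- The homological `i`-th homology functor `H_i` on `D(R)` (with the cochain
conventions of Mathlib, `H_i = H^{-i}`). -/
noncomputable abbrev Hgy (i : ℤ) : DCat R ⥤ ModuleCat.{u} R :=
  DerivedCategory.homologyFunctor _ (-i)

/-- A cocomplete preaisle of `D(R)`: a full (isomorphism-closed) subcategory closed
under suspension, extensions and arbitrary coproducts. -/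
structure IsCocompletePreaisle (A : Set (DCat R)) : Prop where
  mem_of_iso : ∀ {X Y : DCat R}, (X ≅ Y) → X ∈ A → Y ∈ A
  shift_mem : ∀ {X : DCat R}, X ∈ A → X⟦(1 : ℤ)⟧ ∈ A
  ext_mem : ∀ T : Triangle (DCat R), (T ∈ distTriang (DCat R)) →
    T.obj₁ ∈ A → T.obj₃ ∈ A → T.obj₂ ∈ A
  coproduct_mem : ∀ {ι : Type u} (f : ι → DCat R) (c : Cofan f),
    IsColimit c → (∀ i, f i ∈ A) → c.pt ∈ A

/-- `C̄(E)`, the smallest cocomplete preaisle of `D(R)` containing `E`. -/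
def nullClass (E : DCat R) : Set (DCat R) :=
  ⋂₀ {A | IsCocompletePreaisle R A ∧ E ∈ A}

/-- An `R`-module regarded as an object of `D(R)` concentrated in degree `0`. -/
noncomputable abbrev sMod (N : ModuleCat.{u} R) : DCat R :=
  (DerivedCategory.singleFunctor (ModuleCat.{u} R) 0).obj N

/-- A cochain complex is `K`-projective if every chain map from it to an acyclic
complex is null-homotopic. -/
def IsKProjective (P : CochainComplex (ModuleCat.{u} R) ℤ) : Prop :=
  ∀ Y : CochainComplex (ModuleCat.{u} R) ℤ, (∀ n : ℤ, IsZero (Y.homology n)) →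
    ∀ f : P ⟶ Y, Nonempty (Homotopy f 0)

/-- Membership in `D^c_fg(R)`: the objects of `D(R)` isomorphic to a `K`-projective
complex which is degreewise finitely generated and projective. -/
def InDcfg (M : DCat R) : Prop :=
  ∃ P : CochainComplex (ModuleCat.{u} R) ℤ, IsKProjective R P ∧
    (∀ n : ℤ, Module.Finite R (P.X n)) ∧ (∀ n : ℤ, Module.Projective R (P.X n)) ∧
    Nonempty (DerivedCategory.Q.obj P ≅ M)

open DirectSum


/-! ### Auxiliary machinery -/

section Aux

set_option linter.unusedSectionVars false

open DirectSum

variable {R}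

lemma bij_transfer {I : Type u} [DecidableEq I] {A A' : I → Type*}
    [∀ i, AddCommGroup (A i)] [∀ i, AddCommGroup (A' i)] {B B' : Type*}
    [AddCommGroup B] [AddCommGroup B']
    (e : ∀ i, A i ≃+ A' i) (eB : B ≃+ B') (f : ∀ i, A i →+ B) (f' : ∀ i, A' i →+ B')
    (hcomm : ∀ i a, eB (f i a) = f' i (e i a))
    (h : Function.Bijective (DirectSum.toAddMonoid f)) :
    Function.Bijective (DirectSum.toAddMonoid f') := by
  classical
  set E := DFinsupp.mapRange.addEquiv e with hE
  have heq : DirectSum.toAddMonoid f' =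
      (eB.toAddMonoidHom.comp (DirectSum.toAddMonoid f)).comp E.symm.toAddMonoidHom := by
    apply DirectSum.addHom_ext
    intro i a
    have h1 : E.symm ((DirectSum.of A' i) a) = DirectSum.of A i ((e i).symm a) := by
      apply E.injective
      rw [AddEquiv.apply_symm_apply]
      symm
      show DFinsupp.mapRange (fun i x => e i x) (fun i => (e i).map_zero)
        (DFinsupp.single i ((e i).symm a)) = (DirectSum.of A' i) a
      rw [DFinsupp.mapRange_single]
      show DFinsupp.single i ((e i) ((e i).symm a)) = _
      rw [AddEquiv.apply_symm_apply]
      rfl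
    rw [DirectSum.toAddMonoid_of]
    show (f' i) a = eB (DirectSum.toAddMonoid f (E.symm ((DirectSum.of A' i) a)))
    rw [h1, DirectSum.toAddMonoid_of, hcomm i ((e i).symm a), AddEquiv.apply_symm_apply]
  rw [heq]
  exact eB.bijective.comp (h.comp E.symm.bijective)


section ModuleLemmas
variable {I : Type u} [DecidableEq I] (Y : I → ModuleCat.{u} R)

lemma exists_finset_support (M : ModuleCat.{u} R) [Module.Finite R M]
    (φ : M →ₗ[R] ⨁ α, ↥(Y α)) : ∃ S : Finset I, ∀ m, ∀ α ∉ S, φ m α = 0 := by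
  classical
  obtain ⟨s, hs⟩ : (⊤ : Submodule R M).FG := Module.Finite.fg_top
  refine ⟨s.biUnion (fun m => (φ m).support), fun m α hα => ?_⟩
  have hm : m ∈ Submodule.span R (s : Set M) := by rw [hs]; trivial
  set S := s.biUnion (fun m => (φ m).support) with hS
  have : (Submodule.span R (s : Set M)) ≤
      { carrier := {m | ∀ α ∉ S, φ m α = 0}
        add_mem' := fun {a b} ha hb α hα => by
          simp only [Set.mem_setOf_eq] at ha hb ⊢
          rw [map_add, DirectSum.add_apply, ha α hα, hb α hα, add_zero]
        zero_mem' := fun α hα => by simp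
        smul_mem' := fun c {x} hx α hα => by
          simp only [Set.mem_setOf_eq] at hx ⊢
          rw [map_smul, DirectSum.smul_apply, hx α hα, smul_zero] } := by
    rw [Submodule.span_le]
    intro m hm α hα
    simp only [Set.mem_setOf_eq]
    by_contra h
    exact hα (Finset.mem_biUnion.mpr ⟨m, hm, DFinsupp.mem_support_iff.mpr h⟩)
  exact this hm α hα

lemma sum_of_component (S : Finset I) (x : ⨁ α, ↥(Y α)) (hx : ∀ α ∉ S, x α = 0) :
    ∑ α ∈ S, DirectSum.of (fun α => ↥(Y α)) α (x α) = x := by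
  classical
  conv_rhs => rw [← DirectSum.sum_support_of (x := x)]
  symm
  apply Finset.sum_subset
  · intro α hα
    by_contra h
    exact DFinsupp.mem_support_iff.mp hα (hx α h)
  · intro α _ hα
    rw [DFinsupp.notMem_support_iff.mp hα, map_zero]

end ModuleLemmas

section SingleLemmas

noncomputable abbrev sgl (W : ModuleCat.{u} R) : CochainComplex (ModuleCat.{u} R) ℤ :=
  (HomologicalComplex.single (ModuleCat.{u} R) (ComplexShape.up ℤ) 0).obj W

variable (P' : CochainComplex (ModuleCat.{u} R) ℤ) {W W' : ModuleCat.{u} R}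

/-- The degree-zero component of a chain map to a single complex. -/
noncomputable def cpt (f : P' ⟶ sgl W) : P'.X 0 ⟶ W :=
  f.f 0 ≫ (HomologicalComplex.singleObjXSelf (ComplexShape.up ℤ) 0 W).hom

lemma cpt_add (f g : P' ⟶ sgl W) : cpt P' (f + g) = cpt P' f + cpt P' g := by
  simp [cpt, Preadditive.add_comp]

lemma cpt_zero : cpt P' (0 : P' ⟶ sgl W) = 0 := by simp [cpt]

lemma d_comp_cpt (f : P' ⟶ sgl W) : P'.d (-1) 0 ≫ cpt P' f = 0 := by
  rw [cpt, ← Category.assoc, ← f.comm (-1) 0]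
  simp

lemma cpt_injective (f g : P' ⟶ sgl W) (h : cpt P' f = cpt P' g) : f = g := by
  apply HomologicalComplex.to_single_hom_ext
  rw [cpt, cpt] at h
  exact (cancel_mono (HomologicalComplex.singleObjXSelf (ComplexShape.up ℤ) 0 W).hom).mp h

/-- Build a chain map to the single complex from a degree-zero component. -/
noncomputable def mkSgl (φ : P'.X 0 ⟶ W) (hφ : P'.d (-1) 0 ≫ φ = 0) : P' ⟶ sgl W :=
  HomologicalComplex.mkHomToSingle φ (fun i hi => by
    obtain rfl : i = -1 := by simp only [ComplexShape.up_Rel] at hi; omega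
    exact hφ)

lemma cpt_mkSgl (φ : P'.X 0 ⟶ W) (hφ : P'.d (-1) 0 ≫ φ = 0) : cpt P' (mkSgl P' φ hφ) = φ := by
  rw [cpt, mkSgl, HomologicalComplex.mkHomToSingle_f]
  simp

lemma cpt_comp_single_map (f : P' ⟶ sgl W) (u : W ⟶ W') :
    cpt P' (f ≫ (HomologicalComplex.single (ModuleCat.{u} R) (ComplexShape.up ℤ) 0).map u) =
      cpt P' f ≫ u := by
  rw [cpt, cpt]
  simp [HomologicalComplex.single_map_f_self]

lemma exists_of_homotopy (f g : P' ⟶ sgl W) (H : Homotopy f g) :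
    ∃ h : P'.X 1 ⟶ W, cpt P' f - cpt P' g = P'.d 0 1 ≫ h := by
  refine ⟨H.hom 1 0 ≫ (HomologicalComplex.singleObjXSelf (ComplexShape.up ℤ) 0 W).hom, ?_⟩
  have hc := H.comm 0
  rw [dNext_eq H.hom (show (ComplexShape.up ℤ).Rel 0 1 by simp),
    prevD_eq H.hom (show (ComplexShape.up ℤ).Rel (-1) 0 by simp)] at hc
  simp only [HomologicalComplex.single_obj_d, comp_zero, add_zero] at hc
  rw [cpt, cpt, ← Preadditive.sub_comp, hc]
  simp [Preadditive.add_comp]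

/-- Build a homotopy from degree-zero data. -/
noncomputable def homotopyOfCpt (f g : P' ⟶ sgl W) (h : P'.X 1 ⟶ W)
    (hh : cpt P' f - cpt P' g = P'.d 0 1 ≫ h) : Homotopy f g where
  hom i j := if hij : i = 1 ∧ j = 0 then
      eqToHom (congrArg P'.X hij.1) ≫
        (h ≫ (HomologicalComplex.singleObjXSelf (ComplexShape.up ℤ) 0 W).inv) ≫
        eqToHom (congrArg (sgl W).X hij.2.symm)
    else 0
  zero i j hij := by
    rw [dif_neg]
    rintro ⟨rfl, rfl⟩
    exact hij (by simp)
  comm i := by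
    by_cases hi : i = 0
    · subst hi
      rw [dNext_eq _ (show (ComplexShape.up ℤ).Rel 0 1 by simp),
        prevD_eq _ (show (ComplexShape.up ℤ).Rel (-1) 0 by simp)]
      simp only [HomologicalComplex.single_obj_d, comp_zero, add_zero]
      rw [dif_pos ⟨trivial, trivial⟩]
      simp only [eqToHom_refl, Category.id_comp, Category.comp_id]
      have key : f.f 0 - g.f 0 = P'.d 0 1 ≫
          (h ≫ (HomologicalComplex.singleObjXSelf (ComplexShape.up ℤ) 0 W).inv) := by
        rw [cpt, cpt, ← Preadditive.sub_comp] at hh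
        rw [← Category.assoc, ← hh]
        simp
      rw [← key]
      abel
    · exact (HomologicalComplex.isZero_single_obj_X (ComplexShape.up ℤ) 0 W i hi).eq_of_tgt _ _

end SingleLemmas

section KLevel

variable {I : Type u} [DecidableEq I] (Y : I → ModuleCat.{u} R)

noncomputable abbrev DS : ModuleCat.{u} R := ModuleCat.of R (⨁ α, ↥(Y α))

noncomputable def lofHom (α : I) : Y α ⟶ DS Y :=
  ModuleCat.ofHom (DirectSum.lof R I (fun β => ↥(Y β)) α)

noncomputable def cmpHom (β : I) : DS Y ⟶ Y β :=
  ModuleCat.ofHom (DirectSum.component R I (fun γ => ↥(Y γ)) β)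

def dsEl (x : ↥(DS Y)) : ⨁ γ, ↥(Y γ) := x

noncomputable def cofanIso : (∐ Y) ≅ DS Y :=
  (colimit.isColimit _).coconePointUniqueUpToIso (ModuleCat.coproductCoconeIsColimit Y)

lemma ι_cofanIso (α : I) : Sigma.ι Y α ≫ (cofanIso Y).hom = lofHom Y α :=
  (colimit.isColimit _).comp_coconePointUniqueUpToIso_hom
    (ModuleCat.coproductCoconeIsColimit Y) ⟨α⟩

lemma ι_eq_lof (α : I) : Sigma.ι Y α = lofHom Y α ≫ (cofanIso Y).inv := by
  rw [← ι_cofanIso Y α, Category.assoc, Iso.hom_inv_id, Category.comp_id]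

lemma lof_comp_cmp (α β : I) (hab : α ≠ β) : lofHom Y α ≫ cmpHom Y β = 0 := by
  apply ModuleCat.hom_ext
  apply LinearMap.ext
  intro m
  have h := DirectSum.component.of (R := R) (M := fun γ => ↥(Y γ)) (ι := I) β α m
  rw [dif_neg hab] at h
  show DirectSum.component R I (fun γ => ↥(Y γ)) β
    (DirectSum.lof R I (fun γ => ↥(Y γ)) α m) = 0
  rw [DirectSum.lof_eq_of]
  exact h

lemma lof_comp_cmp_self (α : I) : lofHom Y α ≫ cmpHom Y α = 𝟙 (Y α) := by
  apply ModuleCat.hom_ext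
  apply LinearMap.ext
  intro m
  exact DirectSum.component.lof_self (R := R) (M := fun γ => ↥(Y γ)) (ι := I) α m

lemma sum_psi_lof (M : ModuleCat.{u} R) (φ : M ⟶ DS Y)
    (S : Finset I) (hS : ∀ m : M, ∀ α ∉ S, dsEl Y (φ m) α = 0) :
    (∑ α ∈ S, (φ ≫ cmpHom Y α) ≫ lofHom Y α) = φ := by
  apply ModuleCat.hom_ext
  apply LinearMap.ext
  intro m
  have h1 : (∑ α ∈ S, (φ ≫ cmpHom Y α) ≫ lofHom Y α : M ⟶ DS Y).hom m
      = ∑ α ∈ S, DirectSum.of (fun γ => ↥(Y γ)) α (dsEl Y (φ m) α) := by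
    rw [ModuleCat.hom_sum, LinearMap.coe_sum, Finset.sum_apply]
    apply Finset.sum_congr rfl
    intro α _
    show DirectSum.lof R I (fun γ => ↥(Y γ)) α
      (DirectSum.component R I (fun γ => ↥(Y γ)) α (φ m)) = _
    rw [DirectSum.lof_eq_of]
    rfl
  show (∑ α ∈ S, (φ ≫ cmpHom Y α) ≫ lofHom Y α : M ⟶ DS Y).hom m = dsEl Y (φ m)
  rw [h1]
  exact sum_of_component Y S (dsEl Y (φ m)) (hS m)

variable {Y}

noncomputable def cptHom (P' : CochainComplex (ModuleCat.{u} R) ℤ) (W : ModuleCat.{u} R) :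
    (P' ⟶ sgl W) →+ (P'.X 0 ⟶ W) := AddMonoidHom.mk' (cpt P') (cpt_add P')

lemma cpt_sum {J : Type*} (P' : CochainComplex (ModuleCat.{u} R) ℤ)
    {W : ModuleCat.{u} R} (s : Finset J) (f : J → (P' ⟶ sgl W)) :
    cpt P' (∑ i ∈ s, f i) = ∑ i ∈ s, cpt P' (f i) :=
  map_sum (cptHom P' W) f s

variable (Y)

lemma ι_hom_cmp_ne {α β : I} (hαβ : α ≠ β) :
    Sigma.ι Y α ≫ (cofanIso Y).hom ≫ cmpHom Y β = 0 := by
  rw [← Category.assoc, ι_cofanIso, lof_comp_cmp Y α β hαβ]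

lemma ι_hom_cmp_self (α : I) :
    Sigma.ι Y α ≫ (cofanIso Y).hom ≫ cmpHom Y α = 𝟙 (Y α) := by
  rw [← Category.assoc, ι_cofanIso, lof_comp_cmp_self]

lemma k_level (P' : CochainComplex (ModuleCat.{u} R) ℤ)
    [Module.Finite R (P'.X 0)] [Module.Finite R (P'.X 1)] :
    Function.Bijective (DirectSum.toAddMonoid (fun α : I =>
      AddMonoidHom.mk' (fun g : ((HomotopyCategory.quotient (ModuleCat.{u} R)
            (ComplexShape.up ℤ)).obj P' ⟶
          (HomotopyCategory.quotient _ _).obj (sgl (Y α))) =>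
        g ≫ (HomotopyCategory.quotient _ _).map
          ((HomologicalComplex.single (ModuleCat.{u} R) (ComplexShape.up ℤ) 0).map
            (Sigma.ι Y α)))
        (fun f g => by simp [Preadditive.add_comp])) :
      (⨁ α : I, ((HomotopyCategory.quotient _ _).obj P' ⟶
          (HomotopyCategory.quotient _ _).obj (sgl (Y α)))) →+
        ((HomotopyCategory.quotient _ _).obj P' ⟶
          (HomotopyCategory.quotient _ _).obj (sgl (∐ Y)))) := by
  classical
  set Hq := HomotopyCategory.quotient (ModuleCat.{u} R) (ComplexShape.up ℤ) with hHq
  set Sg := HomologicalComplex.single (ModuleCat.{u} R) (ComplexShape.up ℤ) 0 with hSg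
  set F := fun α : I =>
    AddMonoidHom.mk' (fun g : (Hq.obj P' ⟶ Hq.obj (sgl (Y α))) =>
        g ≫ Hq.map (Sg.map (Sigma.ι Y α)))
      (fun f g => by simp [Preadditive.add_comp]) with hF
  constructor
  · rw [injective_iff_map_eq_zero]
    intro x hx
    choose f hf using fun α => Hq.map_surjective (x α)
    have hsum : DirectSum.toAddMonoid F x
        = Hq.map (∑ α ∈ x.support, f α ≫ Sg.map (Sigma.ι Y α)) := by
      conv_lhs => rw [← DirectSum.sum_support_of (x := x)]
      rw [map_sum, Functor.map_sum]
      apply Finset.sum_congr rfl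
      intro α _
      rw [DirectSum.toAddMonoid_of, Functor.map_comp, hf α]
      rfl
    rw [hsum] at hx
    have H : Homotopy (∑ α ∈ x.support, f α ≫ Sg.map (Sigma.ι Y α)) 0 :=
      HomotopyCategory.homotopyOfEq _ _ (by rw [hx, Functor.map_zero])
    obtain ⟨h, hh⟩ := exists_of_homotopy P' _ 0 H
    rw [cpt_zero, sub_zero] at hh
    have hcpt : cpt P' (∑ α ∈ x.support, f α ≫ Sg.map (Sigma.ι Y α))
        = ∑ α ∈ x.support, cpt P' (f α) ≫ Sigma.ι Y α := by
      rw [cpt_sum]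
      exact Finset.sum_congr rfl (fun α _ => cpt_comp_single_map P' (f α) (Sigma.ι Y α))
    rw [hcpt] at hh
    apply DFinsupp.ext
    intro β
    by_cases hβ : β ∈ x.support
    · have e1 : cpt P' (f β) = P'.d 0 1 ≫ h ≫ (cofanIso Y).hom ≫ cmpHom Y β := by
        have e2 := congrArg
          (fun t : (P'.X 0 ⟶ (∐ Y : ModuleCat.{u} R)) =>
            t ≫ ((cofanIso Y).hom ≫ cmpHom Y β)) hh
        simp only [Preadditive.sum_comp, Category.assoc] at e2
        rw [Finset.sum_eq_single β
          (fun α _ hαβ => by rw [ι_hom_cmp_ne Y hαβ, comp_zero])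
          (fun hmem => absurd hβ hmem)] at e2
        rw [ι_hom_cmp_self Y β, Category.comp_id] at e2
        exact e2
      have Hb : Homotopy (f β) 0 :=
        homotopyOfCpt P' _ 0 (h ≫ (cofanIso Y).hom ≫ cmpHom Y β)
          (by rw [cpt_zero, sub_zero, e1])
      rw [DFinsupp.zero_apply, ← hf β,
        HomotopyCategory.eq_of_homotopy _ _ Hb, Functor.map_zero]
    · rw [DFinsupp.notMem_support_iff.mp hβ, DFinsupp.zero_apply]
  · intro g
    obtain ⟨f, rfl⟩ := Hq.map_surjective g
    have hdφ : ∀ α : I, P'.d (-1) 0 ≫ ((cpt P' f ≫ (cofanIso Y).hom) ≫ cmpHom Y α) = 0 := by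
      intro α
      rw [← Category.assoc, ← Category.assoc, d_comp_cpt, zero_comp, zero_comp]
    refine ⟨∑ α ∈ (exists_finset_support Y (P'.X 0) (cpt P' f ≫ (cofanIso Y).hom).hom).choose,
      DirectSum.of (fun α : I => (Hq.obj P' ⟶ Hq.obj (sgl (Y α)))) α
        (Hq.map (mkSgl P' _ (hdφ α))), ?_⟩
    rw [map_sum]
    have e3 : ∀ α : I, DirectSum.toAddMonoid F
        (DirectSum.of (fun α : I => (Hq.obj P' ⟶ Hq.obj (sgl (Y α)))) α
          (Hq.map (mkSgl P' _ (hdφ α))))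
        = Hq.map (mkSgl P' _ (hdφ α) ≫ Sg.map (Sigma.ι Y α)) := by
      intro α
      rw [DirectSum.toAddMonoid_of, Functor.map_comp]
      rfl
    rw [Finset.sum_congr rfl (fun α _ => e3 α), ← Functor.map_sum]
    congr 1
    apply cpt_injective
    rw [cpt_sum]
    have e4 : ∀ α : I, cpt P' (mkSgl P' _ (hdφ α) ≫ Sg.map (Sigma.ι Y α))
        = ((cpt P' f ≫ (cofanIso Y).hom) ≫ cmpHom Y α) ≫ (lofHom Y α ≫ (cofanIso Y).inv) := by
      intro α
      rw [cpt_comp_single_map, cpt_mkSgl, ι_eq_lof]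
    rw [Finset.sum_congr rfl (fun α _ => e4 α)]
    have e5 : ∀ α : I, ((cpt P' f ≫ (cofanIso Y).hom) ≫ cmpHom Y α) ≫
        (lofHom Y α ≫ (cofanIso Y).inv)
        = (((cpt P' f ≫ (cofanIso Y).hom) ≫ cmpHom Y α) ≫ lofHom Y α) ≫ (cofanIso Y).inv := by
      intro α
      simp only [Category.assoc]
    rw [Finset.sum_congr rfl (fun α _ => e5 α), ← Preadditive.sum_comp,
      sum_psi_lof Y (P'.X 0) (cpt P' f ≫ (cofanIso Y).hom) _
        (exists_finset_support Y (P'.X 0) (cpt P' f ≫ (cofanIso Y).hom).hom).choose_spec,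
      Category.assoc, Iso.hom_inv_id, Category.comp_id]

end KLevel


variable (R)

abbrev KCat := HomotopyCategory (ModuleCat.{u} R) (ComplexShape.up ℤ)

def Van (G : KCat R) : Prop :=
  ∀ A : KCat R, (HomotopyCategory.subcategoryAcyclic (ModuleCat.{u} R)) A → ∀ f : G ⟶ A, f = 0

lemma van_of_iso {G G' : KCat R} (e : G' ≅ G) (hG : Van R G) : Van R G' := by
  intro A hA f
  have : e.hom ≫ (e.inv ≫ f) = f := by simp
  rw [← this, hG A hA (e.inv ≫ f), comp_zero]

lemma van_quotient (P : CochainComplex (ModuleCat.{u} R) ℤ) (hP : IsKProjective R P) :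
    Van R ((HomotopyCategory.quotient _ _).obj P) := by
  intro A hA f
  obtain ⟨Z⟩ := A
  rw [show ({ as := Z } : KCat R) = (HomotopyCategory.quotient _ _).obj Z from rfl,
    HomotopyCategory.quotient_obj_mem_subcategoryAcyclic_iff_exactAt] at hA
  obtain ⟨g, rfl⟩ := (HomotopyCategory.quotient _ _).map_surjective f
  obtain ⟨h⟩ := hP Z (fun n => by
    rw [← HomologicalComplex.exactAt_iff_isZero_homology]
    exact hA n) g
  rw [HomotopyCategory.eq_of_homotopy _ _ h, Functor.map_zero]
  rfl

lemma van_shift {G : KCat R} (hG : Van R G) (m : ℤ) : Van R (G⟦m⟧) := by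
  intro A hA f
  have adj := (shiftEquiv (KCat R) m).toAdjunction
  have h0 : (adj.homEquiv G A) f = 0 := by
    exact hG _ ((HomotopyCategory.subcategoryAcyclic _).le_shift (-m) A hA) _
  have h1 : (adj.homEquiv G A) 0 = 0 := by
    rw [Adjunction.homEquiv_unit, Functor.map_zero, comp_zero]
  exact (adj.homEquiv G A).injective (h0.trans h1.symm)

lemma van_bij {G : KCat R} (hG : Van R G) {A B : KCat R} (s : A ⟶ B)
    (hs : (HomotopyCategory.subcategoryAcyclic (ModuleCat.{u} R)).trW s) :
    Function.Bijective (fun g : G ⟶ A => g ≫ s) := by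
  obtain ⟨Z, gz, hz, hT, hZ⟩ := hs
  constructor
  · intro g₁ g₂ h
    simp only at h
    have h0 : (g₁ - g₂) ≫ s = 0 := by
      simp only [Preadditive.sub_comp]
      rw [h, sub_self]
    obtain ⟨k, hk⟩ := Triangle.coyoneda_exact₂ _ (inv_rot_of_distTriang _ hT) (g₁ - g₂) h0
    have : k = 0 := hG _ ((HomotopyCategory.subcategoryAcyclic _).le_shift (-1) Z hZ) k
    rw [this, zero_comp] at hk
    exact sub_eq_zero.mp hk
  · intro h
    obtain ⟨g, hg⟩ := Triangle.coyoneda_exact₂ _ hT h (hG Z hZ _)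
    exact ⟨g, hg.symm⟩

lemma van_Qh_bij {G : KCat R} (hG : Van R G) (A : KCat R) :
    Function.Bijective (fun g : G ⟶ A => DerivedCategory.Qh.map g) := by
  set W := (HomotopyCategory.subcategoryAcyclic (ModuleCat.{u} R)).trW
  constructor
  · intro f g h
    rw [MorphismProperty.map_eq_iff_postcomp DerivedCategory.Qh W] at h
    obtain ⟨Z, s, hs, fac⟩ := h
    exact (van_bij R hG s hs).injective fac
  · intro φ
    obtain ⟨ψ, rfl⟩ := Localization.exists_leftFraction DerivedCategory.Qh W φ
    obtain ⟨g, hg⟩ := (van_bij R hG ψ.s ψ.hs).surjective ψ.f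
    simp only at hg
    refine ⟨g, ?_⟩
    have h1 := MorphismProperty.LeftFraction.map_comp_map_s ψ DerivedCategory.Qh
      (Localization.inverts _ W)
    have h2 : IsIso (DerivedCategory.Qh.map ψ.s) := Localization.inverts _ W _ ψ.hs
    simp only
    rw [← cancel_mono (DerivedCategory.Qh.map ψ.s), h1, ← Functor.map_comp, hg]

lemma van_shift_quotient (P : CochainComplex (ModuleCat.{u} R) ℤ) (hP : IsKProjective R P)
    (m : ℤ) :
    Van R ((HomotopyCategory.quotient _ _).obj
      ((CategoryTheory.shiftFunctor (CochainComplex (ModuleCat.{u} R) ℤ) m).obj P)) := by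
  apply van_of_iso R
    (((HomotopyCategory.quotient (ModuleCat.{u} R) (ComplexShape.up ℤ)).commShiftIso m).app P)
  exact van_shift R (van_quotient R P hP) m

/-- The shift adjunction `-n ⊣ n` on the derived category. -/
noncomputable def theAdj (n : ℤ) :
    CategoryTheory.shiftFunctor (DCat R) (-n) ⊣ CategoryTheory.shiftFunctor (DCat R) n :=
  (shiftEquiv' (DCat R) (-n) n (neg_add_cancel n)).toAdjunction

variable {R}

/-- The comparison map from homotopy-category homs to derived-category homs. -/
noncomputable def PhiFun {X : DCat R} {P : CochainComplex (ModuleCat.{u} R) ℤ}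
    (ψ : DerivedCategory.Q.obj P ≅ X) (n : ℤ) (W : ModuleCat.{u} R)
    (g : (HomotopyCategory.quotient (ModuleCat.{u} R) (ComplexShape.up ℤ)).obj
        ((CategoryTheory.shiftFunctor (CochainComplex (ModuleCat.{u} R) ℤ) (-n)).obj P) ⟶
      (HomotopyCategory.quotient _ _).obj (sgl W)) :
    X ⟶ (sMod R W)⟦n⟧ :=
  ψ.inv ≫ ((theAdj R n).homEquiv (DerivedCategory.Q.obj P) (sMod R W))
    (((DerivedCategory.Q.commShiftIso (-n)).app P).inv ≫ DerivedCategory.Qh.map g)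

lemma PhiFun_add {X : DCat R} {P : CochainComplex (ModuleCat.{u} R) ℤ}
    (ψ : DerivedCategory.Q.obj P ≅ X) (n : ℤ) (W : ModuleCat.{u} R) (g₁ g₂) :
    PhiFun ψ n W (g₁ + g₂) = PhiFun ψ n W g₁ + PhiFun ψ n W g₂ := by
  rw [PhiFun, PhiFun, PhiFun]
  erw [Functor.map_add]
  erw [Preadditive.comp_add,
    Adjunction.homEquiv_unit, Adjunction.homEquiv_unit, Adjunction.homEquiv_unit,
    Functor.map_add, Preadditive.comp_add, Preadditive.comp_add]

lemma PhiFun_bijective {X : DCat R} {P : CochainComplex (ModuleCat.{u} R) ℤ}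
    (hP : IsKProjective R P) (ψ : DerivedCategory.Q.obj P ≅ X) (n : ℤ)
    (W : ModuleCat.{u} R) : Function.Bijective (PhiFun ψ n W) := by
  have b1 := van_Qh_bij R (van_shift_quotient R P hP (-n))
    ((HomotopyCategory.quotient _ _).obj (sgl W))
  have b2 : Function.Bijective (fun u : DerivedCategory.Q.obj
      ((CategoryTheory.shiftFunctor (CochainComplex (ModuleCat.{u} R) ℤ) (-n)).obj P) ⟶
        (sMod R W) => ((DerivedCategory.Q.commShiftIso (-n)).app P).inv ≫ u) := by
    constructor
    · intro u v huv
      simpa using congrArg (fun t => ((DerivedCategory.Q.commShiftIso (-n)).app P).hom ≫ t) huv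
    · intro v
      exact ⟨((DerivedCategory.Q.commShiftIso (-n)).app P).hom ≫ v, by simp⟩
  have b3 := ((theAdj R n).homEquiv (DerivedCategory.Q.obj P) (sMod R W)).bijective
  have b4 : Function.Bijective (fun t : DerivedCategory.Q.obj P ⟶ (sMod R W)⟦n⟧ =>
      ψ.inv ≫ t) := by
    constructor
    · intro u v huv
      simpa using congrArg (fun t => ψ.hom ≫ t) huv
    · intro v
      exact ⟨ψ.hom ≫ v, by simp⟩
  exact b4.comp (b3.comp (b2.comp b1))

lemma PhiFun_natural {X : DCat R} {P : CochainComplex (ModuleCat.{u} R) ℤ}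
    (ψ : DerivedCategory.Q.obj P ≅ X) (n : ℤ) {W W' : ModuleCat.{u} R} (u : W ⟶ W')
    (g : (HomotopyCategory.quotient (ModuleCat.{u} R) (ComplexShape.up ℤ)).obj
        ((CategoryTheory.shiftFunctor (CochainComplex (ModuleCat.{u} R) ℤ) (-n)).obj P) ⟶
      (HomotopyCategory.quotient _ _).obj (sgl W)) :
    PhiFun ψ n W' (g ≫ (HomotopyCategory.quotient _ _).map
        ((HomologicalComplex.single (ModuleCat.{u} R) (ComplexShape.up ℤ) 0).map u)) =
      PhiFun ψ n W g ≫ ((DerivedCategory.singleFunctor (ModuleCat.{u} R) 0).map u)⟦n⟧' := by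
  rw [PhiFun, PhiFun]
  erw [Functor.map_comp]
  have h0 : DerivedCategory.Qh.map ((HomotopyCategory.quotient _ _).map
      ((HomologicalComplex.single (ModuleCat.{u} R) (ComplexShape.up ℤ) 0).map u)) =
      (DerivedCategory.singleFunctor (ModuleCat.{u} R) 0).map u := rfl
  erw [h0, ← Category.assoc (((DerivedCategory.Q.commShiftIso (-n)).app P).inv),
    Adjunction.homEquiv_naturality_right]
  exact (Category.assoc _ _ _).symm

end Aux

/-- For `X ∈ D^c_fg(R)` the canonical map
`⊕_α Hom(X, Σⁿ Y_α) ⟶ Hom(X, Σⁿ ⊕_α Y_α)` is bijective. -/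
theorem hom_commutes_with_coproducts (X : DCat R) (hX : InDcfg R X) (n : ℤ)
    {I : Type u} [DecidableEq I] (Y : I → ModuleCat.{u} R) :
    Function.Bijective
      (DirectSum.toAddMonoid
        (fun α : I =>
          AddMonoidHom.mk'
            (fun f : X ⟶ (sMod R (Y α))⟦n⟧ =>
              f ≫ ((DerivedCategory.singleFunctor (ModuleCat.{u} R) 0).map
                (Sigma.ι Y α))⟦n⟧')
            (fun f g => by simp [Preadditive.add_comp])) :
        (⨁ α : I, (X ⟶ (sMod R (Y α))⟦n⟧)) →+ (X ⟶ (sMod R (∐ Y))⟦n⟧)) := by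
  classical
  obtain ⟨P, hKproj, hfin, hproj, ⟨ψ⟩⟩ := hX
  set P' := (CategoryTheory.shiftFunctor (CochainComplex (ModuleCat.{u} R) ℤ) (-n)).obj P
    with hP'
  haveI h0 : Module.Finite R (P'.X 0) := hfin _
  haveI h1 : Module.Finite R (P'.X 1) := hfin _
  exact bij_transfer
    (fun α => AddEquiv.ofBijective
      (AddMonoidHom.mk' (PhiFun ψ n (Y α)) (PhiFun_add ψ n (Y α)))
      (PhiFun_bijective hKproj ψ n (Y α)))
    (AddEquiv.ofBijective
      (AddMonoidHom.mk' (PhiFun ψ n (∐ Y)) (PhiFun_add ψ n (∐ Y)))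
      (PhiFun_bijective hKproj ψ n (∐ Y)))
    _ _ (fun α g => PhiFun_natural ψ n (Sigma.ι Y α) g) (k_level Y P')
end

section
/- Let M ∈ D_fg(R) with H_n(M) ≠ 0 for some n ∈ ℤ. Then there exists a prime ideal p ∈ Supp H_n(M) such that, writing p = (x_1, …, x_k) and M(0) = M, M(i) = Cone(x_i : M(i−1) → M(i−1)), one has H_n(M(k)) ⊗_R R_p ≠ 0; that is, p ∈ Supp H_n(M ⊗ K(p)). -/
open CategoryTheory CategoryTheory.Limits

universe u

variable (R : Type u) [CommRing R] [IsNoetherianRing R]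

/-- Iterated mapping cones of multiplication maps: `iterCone [] M = M` and
`iterCone (x :: l) M = Cone(x : iterCone l M ⟶ iterCone l M)`. -/
noncomputable def iterCone : List R → CochainComplex (ModuleCat.{u} R) ℤ →
    CochainComplex (ModuleCat.{u} R) ℤ
  | [], M => M
  | x :: l, M => CochainComplex.mappingCone ((x • 𝟙 (iterCone l M) : _))

/-- The Koszul complex `K(x₁, …, x_k)` on a list of elements of `R`, defined
inductively by `K(0) = R` and `K(i) = Cone(xᵢ : K(i−1) ⟶ K(i−1))`. -/
noncomputable def koszul (l : List R) : CochainComplex (ModuleCat.{u} R) ℤ :=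
  iterCone R l
    ((HomologicalComplex.single (ModuleCat.{u} R) (ComplexShape.up ℤ) 0).obj
      (ModuleCat.of R R))

section ModuleLemmas

variable {R}
variable {A B C : Type u} [AddCommGroup A] [Module R A] [AddCommGroup B] [Module R B]
  [AddCommGroup C] [Module R C]

/-- The middle module in an exact sequence with finitely generated outer modules over a
Noetherian ring is finitely generated. -/
lemma aux_finite_of_exact (f : A →ₗ[R] B) (g : B →ₗ[R] C)
    (h : Function.Exact f g) [Module.Finite R A] [Module.Finite R C] :
    Module.Finite R B := by
  have : IsNoetherian R A := isNoetherian_of_isNoetherianRing_of_finite R A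
  have : IsNoetherian R C := isNoetherian_of_isNoetherianRing_of_finite R C
  have : IsNoetherian R B :=
    isNoetherian_of_range_eq_ker f g (by rw [h.linearMap_ker_eq])
  exact Module.Finite.of_restrictScalars_finite R R B

omit [IsNoetherianRing R] in
/-- Nakayama-type argument: if `A → A → B` is exact where the first map is multiplication
by `x ∈ p`, and `p ∈ Supp A`, then `p ∈ Supp B`. -/
lemma aux_support_step [Module.Finite R A] [Module.Finite R B]
    (p : PrimeSpectrum R) (x : R) (hx : x ∈ p.asIdeal)
    (g : A →ₗ[R] B) (hex : Function.Exact (x • (LinearMap.id : A →ₗ[R] A)) g)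
    (hp : p ∈ Module.support R A) : p ∈ Module.support R B := by
  rw [Module.mem_support_iff_of_finite] at hp ⊢
  intro s hs
  by_contra hsp
  -- the range of `s • id : A →ₗ A` is contained in `(span {x}) • ⊤`
  have hrange : LinearMap.range (s • (LinearMap.id : A →ₗ[R] A)) ≤
      (Ideal.span {x}) • (⊤ : Submodule R A) := by
    rintro _ ⟨a, rfl⟩
    have h0 : g (s • a) = 0 := by
      rw [map_smul]
      have : (s • g a : B) = 0 := Module.mem_annihilator.mp hs (g a)
      simpa using this
    obtain ⟨a', ha'⟩ := (hex (s • a)).mp h0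
    simp only [LinearMap.smul_apply, LinearMap.id_apply] at ha' ⊢
    rw [← ha']
    exact Submodule.smul_mem_smul (Ideal.mem_span_singleton_self x) trivial
  obtain ⟨q, hq, -, hcoeff, heval⟩ :=
    LinearMap.exists_monic_and_coeff_mem_pow_and_aeval_eq_zero_of_range_le_smul R
      (s • (LinearMap.id : A →ₗ[R] A)) (Ideal.span {x}) hrange
  have hann : Polynomial.eval s q ∈ Module.annihilator R A := by
    rw [Module.mem_annihilator]
    intro a
    have h1 : Polynomial.aeval (s • (LinearMap.id : A →ₗ[R] A)) q =
        Polynomial.eval s q • (LinearMap.id : A →ₗ[R] A) := by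
      rw [← Module.algebraMap_end_eq_smul_id, ← Module.algebraMap_end_eq_smul_id,
        Polynomial.aeval_algebraMap_apply_eq_algebraMap_eval]
    have := congrFun (congrArg DFunLike.coe (h1 ▸ heval : Polynomial.eval s q •
      (LinearMap.id : A →ₗ[R] A) = 0)) a
    simpa using this
  have hevalp : Polynomial.eval s q ∈ p.asIdeal := hp hann
  set d := q.natDegree with hd
  have hsum : Polynomial.eval s q =
      (∑ i ∈ Finset.range d, q.coeff i * s ^ i) + s ^ d := by
    rw [Polynomial.eval_eq_sum_range, Finset.sum_range_succ, hq.coeff_natDegree, one_mul]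
  have hmem : ∀ i ∈ Finset.range d, q.coeff i * s ^ i ∈ p.asIdeal := by
    intro i hi
    apply Ideal.mul_mem_right
    have h2 : q.coeff i ∈ Ideal.span {x} ^ (d - i) := hcoeff i
    have hi' := Finset.mem_range.mp hi
    have h3 : Ideal.span {x} ^ (d - i) ≤ p.asIdeal :=
      le_trans (Ideal.pow_le_self (by omega)) (Ideal.span_le.mpr (by simpa using hx))
    exact h3 h2
  have hpow : s ^ d ∈ p.asIdeal := by
    have hsummem : (∑ i ∈ Finset.range d, q.coeff i * s ^ i) ∈ p.asIdeal :=
      Ideal.sum_mem _ hmem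
    have : s ^ d = Polynomial.eval s q - ∑ i ∈ Finset.range d, q.coeff i * s ^ i := by
      rw [hsum]; ring
    rw [this]
    exact Ideal.sub_mem _ hevalp hsummem
  exact hsp (p.isPrime.mem_of_pow_mem d hpow)

end ModuleLemmas

open CochainComplex HomologicalComplex HomotopyCategory

omit [IsNoetherianRing R] in
/-- The homology map induced by `x • 𝟙 N` is `x • 𝟙` on homology. -/
lemma aux_homologyMap_smul_id (N : CochainComplex (ModuleCat.{u} R) ℤ) (x : R) (i : ℤ) :
    HomologicalComplex.homologyMap (x • 𝟙 N) i = x • 𝟙 (N.homology i) := by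
  have h : (HomologicalComplex.shortComplexFunctor (ModuleCat.{u} R) (ComplexShape.up ℤ) i).map
      (x • 𝟙 N) = x • 𝟙 (N.sc i) := by
    ext <;> rfl
  rw [HomologicalComplex.homologyMap, h, ShortComplex.homologyMap_smul,
    ShortComplex.homologyMap_id]
  rfl

omit [IsNoetherianRing R] in
/-- Exactness of `H^m(N) → H^m(N) → H^m(Cone(x))` coming from the mapping cone triangle. -/
lemma aux_cone_exact₂ (N : CochainComplex (ModuleCat.{u} R) ℤ) (x : R) (m : ℤ) :
    ∃ w, (ShortComplex.mk (homologyMap (x • 𝟙 N) m)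
      (homologyMap (CochainComplex.mappingCone.inr (x • 𝟙 N)) m) w).Exact := by
  have hT := HomotopyCategory.mappingCone_triangleh_distinguished (x • 𝟙 N)
  have hex := (HomotopyCategory.homologyFunctor (ModuleCat.{u} R)
    (ComplexShape.up ℤ) 0).homologySequence_exact₂ _ hT m
  set Q := HomotopyCategory.quotient (ModuleCat.{u} R) (ComplexShape.up ℤ) with hQ
  set Hm := HomotopyCategory.homologyFunctor (ModuleCat.{u} R) (ComplexShape.up ℤ) m with hHm
  set e := fun (K : CochainComplex (ModuleCat.{u} R) ℤ) =>
    ((HomotopyCategory.homologyFunctorFactors (ModuleCat.{u} R) (ComplexShape.up ℤ) m).app K :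
      Hm.obj (Q.obj K) ≅ K.homology m) with he
  have h1 : Hm.map (Q.map (x • 𝟙 N)) ≫ (e N).hom = (e N).hom ≫ homologyMap (x • 𝟙 N) m :=
    (HomotopyCategory.homologyFunctorFactors (ModuleCat.{u} R)
      (ComplexShape.up ℤ) m).hom.naturality (x • 𝟙 N)
  have h2 : Hm.map (Q.map (CochainComplex.mappingCone.inr (x • 𝟙 N))) ≫
      (e (CochainComplex.mappingCone (x • 𝟙 N))).hom =
      (e N).hom ≫ homologyMap (CochainComplex.mappingCone.inr (x • 𝟙 N)) m :=
    (HomotopyCategory.homologyFunctorFactors (ModuleCat.{u} R)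
      (ComplexShape.up ℤ) m).hom.naturality (CochainComplex.mappingCone.inr (x • 𝟙 N))
  have hw : Hm.map (Q.map (x • 𝟙 N)) ≫
      Hm.map (Q.map (CochainComplex.mappingCone.inr (x • 𝟙 N))) = 0 :=
    (HomotopyCategory.homologyFunctor (ModuleCat.{u} R)
      (ComplexShape.up ℤ) 0).homologySequence_comp _ hT m
  have w : homologyMap (x • 𝟙 N) m ≫
      homologyMap (CochainComplex.mappingCone.inr (x • 𝟙 N)) m = 0 := by
    have h1' := (Iso.inv_comp_eq (e N)).mpr h1
    have h2' := (Iso.inv_comp_eq (e N)).mpr h2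
    rw [← h1', ← h2']
    erw [Category.assoc, Category.assoc, Iso.hom_inv_id_assoc, reassoc_of% hw, zero_comp, comp_zero]
  refine ⟨w, ShortComplex.exact_of_iso (S₁ := ShortComplex.mk (Hm.map (Q.map (x • 𝟙 N)))
      (Hm.map (Q.map (CochainComplex.mappingCone.inr (x • 𝟙 N)))) hw)
    (ShortComplex.isoMk (e N) (e N)
      (e (CochainComplex.mappingCone (x • 𝟙 N))) (by exact h1.symm) (by exact h2.symm)) ?_⟩
  exact hex

omit [IsNoetherianRing R] in
/-- Exactness of `H^m(N) → H^m(Cone(x)) → H^{m+1}(N)` coming from the mapping cone triangle. -/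
lemma aux_cone_exact₃ (N : CochainComplex (ModuleCat.{u} R) ℤ) (x : R) (m : ℤ) :
    ∃ (δ : (CochainComplex.mappingCone (x • 𝟙 N)).homology m ⟶ N.homology (m + 1)), ∃ w,
      (ShortComplex.mk (homologyMap (CochainComplex.mappingCone.inr (x • 𝟙 N)) m) δ w).Exact := by
  have hT := HomotopyCategory.mappingCone_triangleh_distinguished (x • 𝟙 N)
  have hex := (HomotopyCategory.homologyFunctor (ModuleCat.{u} R)
    (ComplexShape.up ℤ) 0).homologySequence_exact₃ _ hT m (m + 1) rfl
  set Q := HomotopyCategory.quotient (ModuleCat.{u} R) (ComplexShape.up ℤ) with hQ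
  set Hm := HomotopyCategory.homologyFunctor (ModuleCat.{u} R) (ComplexShape.up ℤ) m with hHm
  set e := fun (K : CochainComplex (ModuleCat.{u} R) ℤ) =>
    ((HomotopyCategory.homologyFunctorFactors (ModuleCat.{u} R) (ComplexShape.up ℤ) m).app K :
      Hm.obj (Q.obj K) ≅ K.homology m) with he
  set e' := fun (K : CochainComplex (ModuleCat.{u} R) ℤ) =>
    ((HomotopyCategory.homologyFunctorFactors (ModuleCat.{u} R)
        (ComplexShape.up ℤ) (m + 1)).app K :
      (HomotopyCategory.homologyFunctor (ModuleCat.{u} R) (ComplexShape.up ℤ) (m + 1)).obj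
        (Q.obj K) ≅ K.homology (m + 1)) with he'
  have h2 : Hm.map (Q.map (CochainComplex.mappingCone.inr (x • 𝟙 N))) ≫
      (e (CochainComplex.mappingCone (x • 𝟙 N))).hom =
      (e N).hom ≫ homologyMap (CochainComplex.mappingCone.inr (x • 𝟙 N)) m :=
    (HomotopyCategory.homologyFunctorFactors (ModuleCat.{u} R)
      (ComplexShape.up ℤ) m).hom.naturality (CochainComplex.mappingCone.inr (x • 𝟙 N))
  set T := CochainComplex.mappingCone.triangleh (x • 𝟙 N) with hT'
  set δabs := (HomotopyCategory.homologyFunctor (ModuleCat.{u} R)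
    (ComplexShape.up ℤ) 0).homologySequenceδ T m (m + 1) rfl with hδ
  refine ⟨(e (CochainComplex.mappingCone (x • 𝟙 N))).inv ≫ δabs ≫ (e' N).hom, ?_, ?_⟩
  · have h2' := (Iso.inv_comp_eq (e N)).mpr h2
    rw [← h2']
    have hw : Hm.map (Q.map (CochainComplex.mappingCone.inr (x • 𝟙 N))) ≫ δabs = 0 :=
      (HomotopyCategory.homologyFunctor (ModuleCat.{u} R)
        (ComplexShape.up ℤ) 0).comp_homologySequenceδ _ hT m (m + 1) rfl
    erw [Category.assoc, Category.assoc, Iso.hom_inv_id_assoc, reassoc_of% hw, zero_comp, comp_zero]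
  · refine ShortComplex.exact_of_iso (S₁ := ShortComplex.mk
      (Hm.map (Q.map (CochainComplex.mappingCone.inr (x • 𝟙 N)))) δabs
      ((HomotopyCategory.homologyFunctor (ModuleCat.{u} R)
        (ComplexShape.up ℤ) 0).comp_homologySequenceδ _ hT m (m + 1) rfl))
      (ShortComplex.isoMk (e N) (e (CochainComplex.mappingCone (x • 𝟙 N))) (e' N)
        (by exact h2.symm) (by exact (e (CochainComplex.mappingCone (x • 𝟙 N))).hom_inv_id_assoc _)) ?_
    exact hex

omit [IsNoetherianRing R] in
/-- Exactness of short complexes of modules gives `Function.Exact`. -/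
lemma aux_function_exact {S : ShortComplex (ModuleCat.{u} R)} (h : S.Exact) :
    Function.Exact S.f S.g := by
  intro y
  constructor
  · intro hy
    exact (S.moduleCat_exact_iff.mp h) y hy
  · rintro ⟨a, rfl⟩
    exact congrArg (fun (f : S.X₁ ⟶ S.X₃) => ConcreteCategory.hom f a) S.zero

/-- The inductive step: taking the cone of multiplication by `x` preserves finitely
generated homology, and preserves membership of `p` in the support of homology
whenever `x ∈ p`. -/
lemma aux_cone_step (N : CochainComplex (ModuleCat.{u} R) ℤ) (x : R)
    (hfg : ∀ i : ℤ, Module.Finite R (N.homology i)) :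
    (∀ i : ℤ, Module.Finite R ((CochainComplex.mappingCone (x • 𝟙 N)).homology i)) ∧
    ∀ (m : ℤ) (p : PrimeSpectrum R), x ∈ p.asIdeal →
      p ∈ Module.support R (N.homology m) →
      p ∈ Module.support R ((CochainComplex.mappingCone (x • 𝟙 N)).homology m) := by
  have hfin : ∀ i : ℤ, Module.Finite R ((CochainComplex.mappingCone (x • 𝟙 N)).homology i) := by
    intro i
    obtain ⟨δ, w, hex⟩ := aux_cone_exact₃ R N x i
    have := hfg i
    have := hfg (i + 1)
    exact aux_finite_of_exact (homologyMap (CochainComplex.mappingCone.inr (x • 𝟙 N)) i).hom δ.hom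
      (aux_function_exact R hex)
  refine ⟨hfin, fun m p hx hp => ?_⟩
  obtain ⟨w, hex⟩ := aux_cone_exact₂ R N x m
  have hfun : Function.Exact ⇑(homologyMap (x • 𝟙 N) m)
      ⇑(homologyMap (CochainComplex.mappingCone.inr (x • 𝟙 N)) m) := aux_function_exact R hex
  rw [aux_homologyMap_smul_id] at hfun
  have := hfg m
  have := hfin m
  exact aux_support_step p x hx
    (homologyMap (CochainComplex.mappingCone.inr (x • 𝟙 N)) m).hom hfun hp

/-- The iterated version of `aux_cone_step`. -/
lemma aux_iterCone (p : PrimeSpectrum R) (l : List R) (hl : ∀ x ∈ l, x ∈ p.asIdeal)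
    (M : CochainComplex (ModuleCat.{u} R) ℤ) (m : ℤ)
    (hfg : ∀ i : ℤ, Module.Finite R (M.homology i))
    (hp : p ∈ Module.support R (M.homology m)) :
    (∀ i : ℤ, Module.Finite R ((iterCone R l M).homology i)) ∧
      p ∈ Module.support R ((iterCone R l M).homology m) := by
  induction l with
  | nil => exact ⟨hfg, hp⟩
  | cons x l ih =>
    obtain ⟨hfg', hp'⟩ := ih (fun y hy => hl y (List.mem_cons_of_mem x hy))
    have hx : x ∈ p.asIdeal := hl x List.mem_cons_self
    obtain ⟨hfin, hsupp⟩ := aux_cone_step R (iterCone R l M) x hfg'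
    exact ⟨hfin, hsupp m p hx hp'⟩

/-- If `M` has finitely generated homology and `H_n(M) ≠ 0`, then there is a prime
`p ∈ Supp H_n(M)` such that, writing `p = (x₁, …, x_k)` and
`M(i) = Cone(xᵢ : M(i−1) ⟶ M(i−1))`, one has `H_n(M(k))_p ≠ 0`; that is,
`p ∈ Supp H_n(M ⊗ K(p))`. (With the cochain conventions used here, `H_n = H^{-n}`.) -/
theorem exists_prime_support_iterCone
    (M : CochainComplex (ModuleCat.{u} R) ℤ)
    (hfg : ∀ i : ℤ, Module.Finite R (M.homology i))
    (n : ℤ) (hn : ¬ IsZero (M.homology (-n))) :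
    ∃ p ∈ Module.support R (M.homology (-n)),
      ∀ (k : ℕ) (x : Fin k → R), Ideal.span (Set.range x) = p.asIdeal →
        p ∈ Module.support R ((iterCone R (List.ofFn x) M).homology (-n)) := by
  have hne : (Module.support R (M.homology (-n))).Nonempty := by
    rcases Set.eq_empty_or_nonempty (Module.support R (M.homology (-n))) with h | h
    · exfalso
      have : Subsingleton (M.homology (-n)) := Module.support_eq_empty_iff.mp h
      exact hn (ModuleCat.isZero_of_subsingleton _)
    · exact h
  obtain ⟨p, hp⟩ := hne
  refine ⟨p, hp, fun k x hx => ?_⟩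
  have hl : ∀ y ∈ List.ofFn x, y ∈ p.asIdeal := by
    intro y hy
    rw [List.mem_ofFn] at hy
    obtain ⟨i, rfl⟩ := hy
    rw [← hx]
    exact Ideal.subset_span (Set.mem_range_self i)
  exact (aux_iterCone R p (List.ofFn x) hl M (-n) hfg hp).2
end
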